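/- For every integer s ≥ 0 and every g ∈ 𝕂_s there exists f ∈ 𝕂_s with θ·f + τ(f) = g; that is, the Carlitz operator C_θ : 𝕂_s → 𝕂_s is surjective (the Carlitz module C(𝕂_s) is θ-divisible). -/

import Mathlib

noncomputable section

/-- 𝔽_q^{ac} : an algebraic closure of the prime field -/
abbrev Fac (p : ℕ) [Fact p.Prime] : Type := AlgebraicClosure (ZMod p)

/-- L_s = 𝔽_q^{ac}(t₁,…,t_s) -/
abbrev Ls (p : ℕ) [Fact p.Prime] (s : ℕ) : Type :=
  FractionRing (MvPolynomial (Fin s) (Fac p))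

/-- 𝕂_s = Hahn series with exponents in ℚ and coefficients in L_s -/
abbrev Ks (p : ℕ) [Fact p.Prime] (s : ℕ) : Type := HahnSeries ℚ (Ls p s)

/-- φ : the automorphism of L_s fixing t₁,…,t_s and acting as the p-power Frobenius
on 𝔽_q^{ac} -/
def phi (p : ℕ) [Fact p.Prime] (s : ℕ) : Ls p s ≃+* Ls p s :=
  IsFractionRing.ringEquivOfRingEquiv
    (MvPolynomial.mapEquiv (Fin s) (frobeniusEquiv (Fac p) p))

/-- coefficientwise action of a ring morphism on Hahn series -/
def coeffRingHom {Γ R S : Type*} [AddCommMonoid Γ] [PartialOrder Γ] [IsOrderedCancelAddMonoid Γ] [Semiring R]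
    [Semiring S] (f : R →+* S) : HahnSeries Γ R →+* HahnSeries Γ S where
  toFun x := x.map f
  map_one' := HahnSeries.map_one f.toMonoidWithZeroHom
  map_mul' _ _ := HahnSeries.map_mul (f : R →ₙ+* S)
  map_zero' := HahnSeries.map_zero f.toZeroHom
  map_add' _ _ := HahnSeries.map_add f.toAddMonoidHom

/-- rescaling of the exponents of a Hahn series by a positive constant -/
def scaleHom {R : Type*} [Semiring R] (c : ℚ) (hc : 0 < c) :
    HahnSeries ℚ R →+* HahnSeries ℚ R :=
  HahnSeries.embDomainRingHom (AddMonoidHom.mulLeft c)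
    (fun a b hab => mul_left_cancel₀ hc.ne' hab)
    (fun a b => by
      simpa [AddMonoidHom.mulLeft] using
        mul_le_mul_iff_of_pos_left (a := c) (b := a) (c := b) hc)

lemma scale_coeff {R : Type*} [Semiring R] (c : ℚ) (hc : 0 < c) (x : HahnSeries ℚ R) (g : ℚ) :
    (scaleHom c hc x).coeff (c * g) = x.coeff g :=
  HahnSeries.embDomain_mk_coeff _ _

lemma coeffRingHom_coeff {Γ R S : Type*} [AddCommMonoid Γ] [PartialOrder Γ] [IsOrderedCancelAddMonoid Γ] [Semiring R]
    [Semiring S] (f : R →+* S) (x : HahnSeries Γ R) (g : Γ) :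
    (coeffRingHom f x).coeff g = f (x.coeff g) := rfl

/-- μ : the automorphism of 𝕂_s sending ∑ cᵢ θ^{-i} to ∑ φ(cᵢ) θ^{-p·i} -/
def mu (p : ℕ) [Fact p.Prime] (s : ℕ) : Ks p s ≃+* Ks p s :=
  have hp : (0:ℚ) < (p:ℚ) := by exact_mod_cast (Fact.out : p.Prime).pos
  have hp' : (0:ℚ) < (p:ℚ)⁻¹ := by positivity
  RingEquiv.ofRingHom
    ((scaleHom (p:ℚ) hp).comp (coeffRingHom (phi p s).toRingHom))
    ((coeffRingHom (phi p s).symm.toRingHom).comp (scaleHom (p:ℚ)⁻¹ hp'))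
    (by
      ext x g
      have h : g = (p:ℚ) * ((p:ℚ)⁻¹ * g) := by field_simp
      show ((scaleHom (p:ℚ) hp) ((coeffRingHom (phi p s).toRingHom)
        ((coeffRingHom (phi p s).symm.toRingHom)
          ((scaleHom (p:ℚ)⁻¹ hp') x)))).coeff g = x.coeff g
      nth_rewrite 1 [h]
      rw [scale_coeff, coeffRingHom_coeff, coeffRingHom_coeff, scale_coeff]
      simp)
    (by
      ext x g
      have h : g = (p:ℚ)⁻¹ * ((p:ℚ) * g) := by field_simp
      show ((coeffRingHom (phi p s).symm.toRingHom)
        ((scaleHom (p:ℚ)⁻¹ hp') ((scaleHom (p:ℚ) hp)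
          ((coeffRingHom (phi p s).toRingHom) x)))).coeff g = x.coeff g
      rw [coeffRingHom_coeff]
      nth_rewrite 1 [h]
      rw [scale_coeff, scale_coeff, coeffRingHom_coeff]
      simp)

/-- τ = μ^e -/
def tau (p : ℕ) [Fact p.Prime] (e s : ℕ) : Ks p s ≃+* Ks p s := (mu p s) ^ e

/-- 𝔽_q as a subfield of 𝔽_q^{ac} (q = p^e) : the fixed points of x ↦ x^(p^e) -/
def Fq (p : ℕ) [Fact p.Prime] (e : ℕ) : Subfield (Fac p) :=
  (iterateFrobenius (Fac p) p e).eqLocusField (RingHom.id _)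

/-- t_i as an element of L_s -/
def tVar (p : ℕ) [Fact p.Prime] (s : ℕ) (i : Fin s) : Ls p s :=
  algebraMap (MvPolynomial (Fin s) (Fac p)) (Ls p s) (MvPolynomial.X i)

/-- the inclusion 𝔽_q^{ac} → L_s -/
def iota (p : ℕ) [Fact p.Prime] (s : ℕ) : Fac p →+* Ls p s :=
  (algebraMap (MvPolynomial (Fin s) (Fac p)) (Ls p s)).comp MvPolynomial.C

/-- θ ∈ 𝕂_s : the Hahn series with single term of exponent -1 and coefficient 1 -/
def theta (p : ℕ) [Fact p.Prime] (s : ℕ) : Ks p s := HahnSeries.single (-1 : ℚ) 1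

/-- the inclusion of L_s in 𝕂_s as constant Hahn series -/
def cK (p : ℕ) [Fact p.Prime] (s : ℕ) : Ls p s →+* Ks p s := HahnSeries.C

open scoped Classical in
/-- the sum of a family of Hahn series, when the family is summable
(junk value 0 otherwise) -/
def hahnSum {Γ R α : Type*} [PartialOrder Γ] [AddCommMonoid R]
    (f : α → HahnSeries Γ R) : HahnSeries Γ R :=
  if h : ∃ S : HahnSeries.SummableFamily Γ R α, ⇑S = f then h.choose.hsum else 0

/-- evaluation at θ of a polynomial of A = 𝔽_q[θ], giving an element of 𝕂_s -/
def AtoK (p : ℕ) [Fact p.Prime] (e s : ℕ) : Polynomial (Fq p e) →+* Ks p s :=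
  Polynomial.eval₂RingHom
    ((cK p s).comp ((iota p s).comp (Fq p e).subtype)) (theta p s)

/-- d_n ∈ 𝕂_s : the product of all monic polynomials of degree n of A -/
def dK (p : ℕ) [Fact p.Prime] (e s : ℕ) (n : ℕ) : Ks p s :=
  ∏ᶠ (a : Polynomial (Fq p e)) (_ : a.Monic ∧ a.natDegree = n), AtoK p e s a

/-- the Carlitz exponential exp_C : 𝕂_s → 𝕂_s, exp_C(f) = ∑_{i≥0} d_i⁻¹ τ^i(f) -/
def expC (p : ℕ) [Fact p.Prime] (e s : ℕ) (f : Ks p s) : Ks p s :=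
  hahnSum fun i : ℕ => (dK p e s i)⁻¹ * ((tau p e s) ^ i) f

/-- the subfield 𝔽_p(t₁,…,t_s) of 𝕂_s -/
def FpT (p : ℕ) [Fact p.Prime] (s : ℕ) : Subfield (Ks p s) :=
  Subfield.closure (Set.range fun i => cK p s (tVar p s i))

/-- the subfield 𝔽_q(t₁,…,t_s) of 𝕂_s -/
def FqT (p : ℕ) [Fact p.Prime] (e s : ℕ) : Subfield (Ks p s) :=
  Subfield.closure
    (((cK p s).comp (iota p s)) '' (Fq p e) ∪ Set.range fun i => cK p s (tVar p s i))

/-- the subfield 𝔽_q(θ,t₁,…,t_s) of 𝕂_s -/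
def FqThetaT (p : ℕ) [Fact p.Prime] (e s : ℕ) : Subfield (Ks p s) :=
  Subfield.closure
    (((cK p s).comp (iota p s)) '' (Fq p e) ∪ (Set.range fun i => cK p s (tVar p s i))
      ∪ {theta p s})

/-- the subring 𝔽_q(t₁,…,t_s)[θ] of 𝕂_s -/
def polyA (p : ℕ) [Fact p.Prime] (e s : ℕ) : Subring (Ks p s) :=
  Subring.closure ((FqT p e s : Set (Ks p s)) ∪ {theta p s})

/-- the subring 𝔽_q[t₁,…,t_s,θ] of 𝕂_s -/
def polyFqT (p : ℕ) [Fact p.Prime] (e s : ℕ) : Subring (Ks p s) :=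
  Subring.closure
    (((cK p s).comp (iota p s)) '' (Fq p e) ∪ (Set.range fun i => cK p s (tVar p s i))
      ∪ {theta p s})

/-- the zeta value ζ_A(n; r) ∈ 𝕂_s, for r ≤ s -/
def zetaA (p : ℕ) [Fact p.Prime] (e s : ℕ) (n r : ℕ) (h : r ≤ s) : Ks p s :=
  hahnSum fun a : {a : Polynomial (Fq p e) // a.Monic} =>
    cK p s (∏ i : Fin r,
      Polynomial.eval₂ ((iota p s).comp (Fq p e).subtype) (tVar p s (Fin.castLE h i)) a.1)
      * (AtoK p e s a.1) ^ (-(n : ℤ))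

/-- the Carlitz operator C_θ -/
def Ctheta (p : ℕ) [Fact p.Prime] (e s : ℕ) (f : Ks p s) : Ks p s :=
  theta p s * f + tau p e s f

/-- C_a for a ∈ 𝔽_q(t₁,…,t_s)[θ], given as a polynomial in θ with coefficients in
𝔽_q(t₁,…,t_s) : C_a(f) = ∑_j a_j C_θ^{∘j}(f) -/
def Cpoly (p : ℕ) [Fact p.Prime] (e s : ℕ) (a : Polynomial (FqT p e s)) (f : Ks p s) : Ks p s :=
  a.sum fun j c => (c : Ks p s) * (Ctheta p e s)^[j] f

/-- the element of 𝕂_s defined by a polynomial a ∈ 𝔽_q(t₁,…,t_s)[θ] -/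
def evalA (p : ℕ) [Fact p.Prime] (e s : ℕ) (a : Polynomial (FqT p e s)) : Ks p s :=
  Polynomial.eval₂ (FqT p e s).subtype (theta p s) a

section Stage1
variable (p : ℕ) [Fact p.Prime] (s : ℕ)

lemma ringEquiv_mul_apply {α : Type*} [Semiring α] (f g : α ≃+* α) (x : α) :
    (f * g) x = f (g x) := rfl

lemma ringEquiv_pow_succ_apply {α : Type*} [Semiring α] (f : α ≃+* α) (n : ℕ) (x : α) :
    (f ^ (n+1)) x = f ((f ^ n) x) := by
  rw [pow_succ']; rfl

lemma mu_coeff (x : Ks p s) (a : ℚ) :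
    (mu p s x).coeff a = phi p s (x.coeff (a / p)) := by
  have hp : (0:ℚ) < (p:ℚ) := by exact_mod_cast (Fact.out : p.Prime).pos
  show ((scaleHom (p:ℚ) hp) ((coeffRingHom (phi p s).toRingHom) x)).coeff a = _
  have h : a = (p:ℚ) * (a / p) := by field_simp
  nth_rewrite 1 [h]
  rw [scale_coeff, coeffRingHom_coeff]; rfl

lemma muPow_coeff (n : ℕ) (x : Ks p s) (a : ℚ) :
    ((mu p s ^ n) x).coeff a = ((phi p s ^ n)) (x.coeff (a / (p:ℚ)^n)) := by
  induction n generalizing a with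
  | zero => simp
  | succ n ih =>
      rw [ringEquiv_pow_succ_apply, mu_coeff, ih, ringEquiv_pow_succ_apply]
      ring_nf

lemma tau_coeff (e : ℕ) (x : Ks p s) (a : ℚ) :
    (tau p e s x).coeff a = ((phi p s ^ e)) (x.coeff (a / (p:ℚ)^e)) :=
  muPow_coeff p s e x a

lemma tau_single (e : ℕ) (b : ℚ) (c : Ls p s) :
    tau p e s (HahnSeries.single b c)
      = HahnSeries.single ((p:ℚ)^e * b) ((phi p s ^ e) c) := by
  have hp : (0:ℚ) < (p:ℚ)^e := by
    have : (0:ℚ) < (p:ℚ) := by exact_mod_cast (Fact.out : p.Prime).pos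
    positivity
  ext a
  rw [tau_coeff]
  rw [HahnSeries.coeff_single, HahnSeries.coeff_single]
  by_cases h : a = (p:ℚ)^e * b
  · have h1 : a / (p:ℚ)^e = b := by rw [h]; field_simp
    rw [if_pos h1, if_pos h]
  · have h1 : ¬ (a / (p:ℚ)^e = b) := by
      intro hc; exact h (by rw [← hc]; field_simp)
    rw [if_neg h1, if_neg h, map_zero]
end Stage1

section FieldTheory
set_option synthInstance.maxHeartbeats 1000000
set_option maxHeartbeats 2000000

lemma charP_Ls (p : ℕ) [Fact p.Prime] (s : ℕ) : CharP (Ls p s) p := by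
  let f : ZMod p →+* Ls p s :=
    (algebraMap (MvPolynomial (Fin s) (Fac p)) (Ls p s)).comp
      ((MvPolynomial.C : Fac p →+* MvPolynomial (Fin s) (Fac p)).comp
        (algebraMap (ZMod p) (Fac p)))
  exact charP_of_injective_ringHom f.injective p

lemma phi_algebraMap (p : ℕ) [Fact p.Prime] (s : ℕ) (P : MvPolynomial (Fin s) (Fac p)) :
    phi p s (algebraMap (MvPolynomial (Fin s) (Fac p)) (Ls p s) P)
      = algebraMap (MvPolynomial (Fin s) (Fac p)) (Ls p s)
          (MvPolynomial.map (frobenius (Fac p) p) P) := by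
  unfold phi
  rw [IsFractionRing.ringEquivOfRingEquiv_algebraMap]
  rfl

lemma phiPow_algebraMap (p : ℕ) [Fact p.Prime] (s : ℕ) (m : ℕ)
    (P : MvPolynomial (Fin s) (Fac p)) :
    ((phi p s)^m) (algebraMap (MvPolynomial (Fin s) (Fac p)) (Ls p s) P)
      = algebraMap (MvPolynomial (Fin s) (Fac p)) (Ls p s)
          (MvPolynomial.map (iterateFrobenius (Fac p) p m) P) := by
  induction m with
  | zero => simp [MvPolynomial.map_id]
  | succ m ih =>
      rw [ringEquiv_pow_succ_apply, ih, phi_algebraMap, MvPolynomial.map_map]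
      have h : (frobenius (Fac p) p).comp (iterateFrobenius (Fac p) p m)
          = iterateFrobenius (Fac p) p (m+1) := by
        rw [← iterateFrobenius_one (Fac p) p, ← iterateFrobenius_add, add_comm]
      rw [h]

lemma phiPow_iota (p : ℕ) [Fact p.Prime] (s : ℕ) (m : ℕ) (α : Fac p) :
    ((phi p s)^m) (iota p s α) = iota p s (α ^ p ^ m) := by
  have h : iota p s α
      = algebraMap (MvPolynomial (Fin s) (Fac p)) (Ls p s) (MvPolynomial.C α) := rfl
  rw [h, phiPow_algebraMap, MvPolynomial.map_C, iterateFrobenius_def]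
  rfl

lemma exists_fixed_const (p : ℕ) [Fact p.Prime] (x : Fac p) :
    ∃ m : ℕ, 0 < m ∧ x ^ p ^ m = x := by
  have halg : IsIntegral (ZMod p) x :=
    (Algebra.IsAlgebraic.isAlgebraic (R := ZMod p) x).isIntegral
  set F := IntermediateField.adjoin (ZMod p) ({x} : Set (Fac p)) with hF
  haveI : FiniteDimensional (ZMod p) F :=
    IntermediateField.adjoin.finiteDimensional halg
  haveI : Finite F := Module.finite_of_finite (ZMod p)
  letI : Fintype F := Fintype.ofFinite _
  haveI : CharP F p :=
    (algebraMap F (Fac p)).charP (algebraMap F (Fac p)).injective p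
  obtain ⟨n, -, hcard⟩ := FiniteField.card F p
  set y : F := ⟨x, IntermediateField.mem_adjoin_simple_self (ZMod p) x⟩ with hy
  have hpow : y ^ p ^ (n : ℕ) = y := by rw [← hcard]; exact FiniteField.pow_card y
  refine ⟨n, n.pos, ?_⟩
  have := congrArg (algebraMap F (Fac p)) hpow
  rw [map_pow] at this
  exact this

lemma fixed_poly_mul (p : ℕ) [Fact p.Prime] (s : ℕ) (P : MvPolynomial (Fin s) (Fac p)) (m : ℕ)
    (h : MvPolynomial.map (iterateFrobenius (Fac p) p m) P = P) (k : ℕ) :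
    MvPolynomial.map (iterateFrobenius (Fac p) p (m * k)) P = P := by
  induction k with
  | zero => simp [MvPolynomial.map_id]
  | succ k ih =>
      rw [Nat.mul_succ, iterateFrobenius_add, ← MvPolynomial.map_map, h, ih]

lemma exists_fixed_poly (p : ℕ) [Fact p.Prime] (s : ℕ) (P : MvPolynomial (Fin s) (Fac p)) :
    ∃ m : ℕ, 0 < m ∧ MvPolynomial.map (iterateFrobenius (Fac p) p m) P = P := by
  induction P using MvPolynomial.induction_on with
  | C a =>
      obtain ⟨m, hm, hf⟩ := exists_fixed_const p a
      exact ⟨m, hm, by rw [MvPolynomial.map_C, iterateFrobenius_def, hf]⟩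
  | add P Q hP hQ =>
      obtain ⟨m1, hm1, h1⟩ := hP
      obtain ⟨m2, hm2, h2⟩ := hQ
      refine ⟨m1 * m2, Nat.mul_pos hm1 hm2, ?_⟩
      rw [map_add, fixed_poly_mul p s P m1 h1 m2]
      have : m1 * m2 = m2 * m1 := Nat.mul_comm _ _
      rw [this, fixed_poly_mul p s Q m2 h2 m1]
  | mul_X P i hP =>
      obtain ⟨m, hm, h⟩ := hP
      exact ⟨m, hm, by rw [map_mul, MvPolynomial.map_X, h]⟩

lemma exists_tfix (p : ℕ) [Fact p.Prime] (e s : ℕ) (c : Ls p s) :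
    ∃ n : ℕ, 0 < n ∧ ((phi p s)^(e * n)) c = c := by
  obtain ⟨P, Q, hQ, rfl⟩ :=
    IsFractionRing.div_surjective (A := MvPolynomial (Fin s) (Fac p)) c
  obtain ⟨m1, hm1, h1⟩ := exists_fixed_poly p s P
  obtain ⟨m2, hm2, h2⟩ := exists_fixed_poly p s Q
  refine ⟨m1 * m2, Nat.mul_pos hm1 hm2, ?_⟩
  have hP : MvPolynomial.map (iterateFrobenius (Fac p) p (e * (m1 * m2))) P = P := by
    have : e * (m1 * m2) = m1 * (e * m2) := by ring
    rw [this]; exact fixed_poly_mul p s P m1 h1 (e * m2)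
  have hQ' : MvPolynomial.map (iterateFrobenius (Fac p) p (e * (m1 * m2))) Q = Q := by
    have : e * (m1 * m2) = m2 * (e * m1) := by ring
    rw [this]; exact fixed_poly_mul p s Q m2 h2 (e * m1)
  rw [map_div₀, phiPow_algebraMap, phiPow_algebraMap, hP, hQ']

lemma exists_traceone_const (p : ℕ) [Fact p.Prime] (e : ℕ) (he : 1 ≤ e) (n : ℕ) (hn : 0 < n) :
    ∃ α : Fac p, (∑ j ∈ Finset.range n, α ^ (p^e) ^ j) = 1 ∧ α ^ (p^e) ^ n = α := by
  have hp2 : 2 ≤ p := (Fact.out : p.Prime).two_le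
  have hq2 : 2 ≤ p ^ e := by
    calc 2 ≤ p := hp2
    _ = p ^ 1 := (pow_one p).symm
    _ ≤ p ^ e := Nat.pow_le_pow_right (by omega) he
  set q : ℕ := p ^ e with hqdef
  set f : Polynomial (Fac p) :=
    (∑ j ∈ Finset.range n, Polynomial.X ^ q ^ j) - 1 with hfdef
  have hcoeff : f.coeff (q ^ (n-1)) = 1 := by
    rw [hfdef, Polynomial.coeff_sub, Polynomial.finset_sum_coeff]
    have hterm : ∀ j ∈ Finset.range n,
        (Polynomial.X ^ q ^ j : Polynomial (Fac p)).coeff (q ^ (n-1))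
          = if j = n-1 then 1 else 0 := by
      intro j hj
      rw [Polynomial.coeff_X_pow]
      by_cases h : j = n - 1
      · rw [if_pos h, if_pos (by rw [h])]
      · rw [if_neg h, if_neg (fun hEq => h (Nat.pow_right_injective hq2 hEq).symm)]
    rw [Finset.sum_congr rfl hterm, Finset.sum_ite_eq' (Finset.range n) (n-1) (fun _ => 1),
      if_pos (Finset.mem_range.mpr (by omega)), Polynomial.coeff_one,
      if_neg (by positivity : ¬ (q ^ (n-1) = 0))]
    ring
  have hdeg : f.degree ≠ 0 := by
    intro h0
    have h1 : q ^ (n-1) ≤ f.natDegree :=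
      Polynomial.le_natDegree_of_ne_zero (by rw [hcoeff]; exact one_ne_zero)
    have h2 : f.natDegree = 0 := Polynomial.natDegree_eq_of_degree_eq_some h0
    have h3 : 0 < q ^ (n-1) := pow_pos (by omega) _
    omega
  obtain ⟨α, hroot⟩ := IsAlgClosed.exists_root f hdeg
  have heval : (∑ j ∈ Finset.range n, α ^ q ^ j) = 1 := by
    have := hroot
    rw [Polynomial.IsRoot, hfdef, Polynomial.eval_sub, Polynomial.eval_one,
      Polynomial.eval_finset_sum] at this
    simp only [Polynomial.eval_pow, Polynomial.eval_X] at this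
    exact sub_eq_zero.mp this
  refine ⟨α, heval, ?_⟩
  have happ := congrArg (iterateFrobenius (Fac p) p e) heval
  rw [map_sum, map_one] at happ
  have hterm2 : ∀ j, iterateFrobenius (Fac p) p e (α ^ q ^ j) = α ^ q ^ (j+1) := by
    intro j
    rw [iterateFrobenius_def, ← pow_mul, ← hqdef, ← pow_succ]
  simp only [hterm2] at happ
  have e1 : (∑ j ∈ Finset.range (n+1), α ^ q ^ j)
      = (∑ j ∈ Finset.range n, α ^ q ^ (j+1)) + α ^ q ^ 0 :=
    Finset.sum_range_succ' _ n
  have e2 : (∑ j ∈ Finset.range (n+1), α ^ q ^ j)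
      = (∑ j ∈ Finset.range n, α ^ q ^ j) + α ^ q ^ n :=
    Finset.sum_range_succ _ n
  rw [happ, heval] at *
  have : α ^ q ^ 0 = α ^ q ^ n := by rw [e1] at e2; exact (add_left_cancel e2)
  rw [pow_zero, pow_one] at this
  exact this.symm

lemma sub_surj (p : ℕ) [Fact p.Prime] (e s : ℕ) (he : 1 ≤ e) (c : Ls p s) :
    ∃ y : Ls p s, y - ((phi p s)^e) y = c := by
  haveI : CharP (Ls p s) p := charP_Ls p s
  set T : Ls p s ≃+* Ls p s := (phi p s)^e with hT
  obtain ⟨n₀, hn₀, hfix0⟩ := exists_tfix p e s c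
  have hfix : (T^n₀) c = c := by rw [hT, ← pow_mul]; exact hfix0
  have hp0 : 0 < p := (Fact.out : p.Prime).pos
  set n := p * n₀ with hn_def
  have hn : 0 < n := Nat.mul_pos hp0 hn₀
  have hfixmul : ∀ k, (T^(k * n₀)) c = c := by
    intro k
    induction k with
    | zero => rw [Nat.zero_mul, pow_zero]; rfl
    | succ k ih =>
        rw [Nat.succ_mul, pow_add, ringEquiv_mul_apply, hfix, ih]
  -- trace of c vanishes
  have htr : ∑ j ∈ Finset.range n, (T^j) c = 0 := by
    have block : ∀ k : ℕ, ∑ j ∈ Finset.range (k * n₀), (T^j) c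
        = k • (∑ j ∈ Finset.range n₀, (T^j) c) := by
      intro k
      induction k with
      | zero => simp
      | succ k ih =>
          rw [Nat.succ_mul, Finset.sum_range_add, ih, succ_nsmul]
          congr 1
          refine Finset.sum_congr rfl (fun j hj => ?_)
          rw [add_comm (k * n₀) j, pow_add, ringEquiv_mul_apply, hfixmul k]
    rw [hn_def, block p, nsmul_eq_mul, CharP.cast_eq_zero (Ls p s) p, zero_mul]
  obtain ⟨α, hα1, hα2⟩ := exists_traceone_const p e he n hn
  set θ₀ := iota p s α with hθ₀
  have hTj : ∀ j, (T^j) θ₀ = iota p s (α ^ (p^e) ^ j) := by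
    intro j
    rw [hT, ← pow_mul, hθ₀, phiPow_iota, pow_mul]
  have hθtr : ∑ j ∈ Finset.range n, (T^j) θ₀ = 1 := by
    have : ∀ j ∈ Finset.range n, (T^j) θ₀ = iota p s (α ^ (p^e) ^ j) :=
      fun j _ => hTj j
    rw [Finset.sum_congr rfl this, ← map_sum, hα1, map_one]
  have hθfix : (T^n) θ₀ = θ₀ := by rw [hTj n, hα2]
  -- partial sums
  set sfun : ℕ → Ls p s := fun k => ∑ i ∈ Finset.range k, (T^i) c with hsfun
  have hstep : ∀ k, T (sfun k) = sfun (k+1) - c := by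
    intro k
    rw [hsfun]
    simp only
    rw [map_sum, Finset.sum_range_succ' (fun i => (T^i) c) k]
    have : ∀ i ∈ Finset.range k, T ((T^i) c) = (T^(i+1)) c := by
      intro i _
      rw [ringEquiv_pow_succ_apply]
    rw [Finset.sum_congr rfl this, pow_zero]
    have h1 : (1 : Ls p s ≃+* Ls p s) c = c := rfl
    rw [h1]
    ring
  set y : Ls p s := ∑ k ∈ Finset.range n, sfun k * (T^k) θ₀ with hy
  refine ⟨y, ?_⟩
  have hTy : T y = y - c := by
    rw [hy, map_sum]
    have term : ∀ k ∈ Finset.range n, T (sfun k * (T^k) θ₀)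
        = sfun (k+1) * (T^(k+1)) θ₀ - c * (T^(k+1)) θ₀ := by
      intro k _
      rw [map_mul, hstep, ← ringEquiv_pow_succ_apply, sub_mul]
    rw [Finset.sum_congr rfl term, Finset.sum_sub_distrib, ← Finset.mul_sum]
    have hA : ∑ k ∈ Finset.range n, sfun (k+1) * (T^(k+1)) θ₀ = y := by
      have e1 : ∑ k ∈ Finset.range (n+1), sfun k * (T^k) θ₀
          = (∑ k ∈ Finset.range n, sfun (k+1) * (T^(k+1)) θ₀) + sfun 0 * (T^0) θ₀ :=
        Finset.sum_range_succ' _ n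
      have e2 : ∑ k ∈ Finset.range (n+1), sfun k * (T^k) θ₀
          = y + sfun n * (T^n) θ₀ := Finset.sum_range_succ _ n
      have hs0 : sfun 0 = 0 := by rw [hsfun]; simp
      have hsn : sfun n = 0 := htr
      rw [hs0, zero_mul, add_zero] at e1
      rw [hsn, zero_mul, add_zero] at e2
      rw [← e1, e2]
    have hB : ∑ k ∈ Finset.range n, (T^(k+1)) θ₀ = 1 := by
      have e1 : ∑ k ∈ Finset.range (n+1), (T^k) θ₀
          = (∑ k ∈ Finset.range n, (T^(k+1)) θ₀) + (T^0) θ₀ :=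
        Finset.sum_range_succ' _ n
      have e2 : ∑ k ∈ Finset.range (n+1), (T^k) θ₀
          = (∑ k ∈ Finset.range n, (T^k) θ₀) + (T^n) θ₀ := Finset.sum_range_succ _ n
      rw [hθtr, hθfix] at e2
      rw [pow_zero] at e1
      have h1 : (1 : Ls p s ≃+* Ls p s) θ₀ = θ₀ := rfl
      rw [h1] at e1
      rw [e2] at e1
      have := add_right_cancel e1.symm
      exact this
    rw [hA, hB, mul_one]
  rw [hTy]
  ring

lemma AS_surj (p : ℕ) [Fact p.Prime] (e s : ℕ) (he : 1 ≤ e) (c : Ls p s) :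
    ∃ x : Ls p s, x + ((phi p s)^e) x = c := by
  have hp2 : 2 ≤ p := (Fact.out : p.Prime).two_le
  have hq2 : 2 ≤ p ^ e := by
    calc 2 ≤ p := hp2
    _ = p ^ 1 := (pow_one p).symm
    _ ≤ p ^ e := Nat.pow_le_pow_right (by omega) he
  obtain ⟨lam, hlam⟩ := IsAlgClosed.exists_pow_nat_eq (-1 : Fac p) (n := p^e - 1) (by omega)
  have hlam0 : lam ≠ 0 := by
    intro h
    rw [h, zero_pow (by omega : p^e - 1 ≠ 0)] at hlam
    exact one_ne_zero (neg_eq_zero.mp hlam.symm)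
  set il : Ls p s := iota p s lam with hil_def
  have hil : il ≠ 0 := fun h => hlam0 ((iota p s).injective (by rw [← hil_def, h, map_zero]))
  obtain ⟨y, hy⟩ := sub_surj p e s he (c / il)
  refine ⟨il * y, ?_⟩
  have hpow : lam ^ (p^e) = -lam := by
    have h1 : p^e = (p^e - 1) + 1 := by omega
    rw [h1, pow_succ, hlam]
    ring
  have hTil : ((phi p s)^e) il = -il := by
    rw [hil_def, phiPow_iota, hpow, map_neg]
  rw [map_mul, hTil]
  have : il * y + -il * ((phi p s)^e) y = il * (y - ((phi p s)^e) y) := by ring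
  rw [this, hy, mul_div_cancel₀ c hil]

end FieldTheory

section HahnConstruction
set_option synthInstance.maxHeartbeats 1000000
set_option maxHeartbeats 4000000

lemma finsum_nat_succ {M : Type*} [AddCommMonoid M] (f : ℕ → M)
    (hf : (Function.support f).Finite) : ∑ᶠ n, f n = f 0 + ∑ᶠ n, f (n+1) := by
  obtain ⟨N, hN⟩ : ∃ N : ℕ, ∀ n ∈ Function.support f, n < N := by
    obtain ⟨N, hN⟩ := hf.bddAbove
    exact ⟨N+1, fun n hn => Nat.lt_succ_of_le (hN hn)⟩
  have h1 : ∑ᶠ n, f n = ∑ n ∈ Finset.range (N+1), f n :=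
    finsum_eq_sum_of_support_subset f (fun n hn => Finset.mem_coe.mpr
      (Finset.mem_range.mpr (Nat.lt_succ_of_lt (hN n hn))))
  have h2 : ∑ᶠ n, f (n+1) = ∑ n ∈ Finset.range N, f (n+1) :=
    finsum_eq_sum_of_support_subset _ (fun n hn => Finset.mem_coe.mpr
      (Finset.mem_range.mpr (by have := hN (n+1) hn; omega)))
  rw [h1, h2, Finset.sum_range_succ' f N, add_comm]

lemma finite_hits {S : Set ℚ} (hS : S.IsWF) {u : ℕ → ℚ} (hu : StrictAnti u) :
    {n : ℕ | u n ∈ S}.Finite := by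
  by_contra hinf
  have hm : StrictMono (Nat.nth (fun n => u n ∈ S)) := Nat.nth_strictMono hinf
  exact Set.isWF_iff_no_descending_seq.mp hS (fun k => u (Nat.nth (fun n => u n ∈ S) k))
    (hu.comp_strictMono hm) (fun k => Nat.nth_mem_of_infinite hinf k)

lemma exists_const_subseq {nf : ℕ → ℕ} {N : ℕ} (hN : ∀ k, nf k ≤ N) :
    ∃ n, {k | nf k = n}.Infinite := by
  by_contra hA
  push_neg at hA
  have hfin : (Set.univ : Set ℕ).Finite := by
    have hsub : (Set.univ : Set ℕ) ⊆ ⋃ n ∈ Finset.range (N+1), {k | nf k = n} := by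
      intro k _
      simp only [Set.mem_iUnion]
      exact ⟨nf k, Finset.mem_range.mpr (Nat.lt_succ_of_le (hN k)), rfl⟩
    exact (((Finset.range (N+1)).finite_toSet.biUnion (fun n _ => hA n)).subset hsub)
  exact Set.infinite_univ hfin

lemma ringEquiv_map_finsum {α M : Type*} [CommRing M] (T : M ≃+* M) (f : α → M) :
    T (∑ᶠ i, f i) = ∑ᶠ i, T (f i) :=
  T.toAddEquiv.map_finsum f

lemma isWF_A {S : Set ℚ} (hS : S.IsWF) (hpos : ∀ x ∈ S, 0 < x) {Q : ℚ} (hQ : 1 < Q) :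
    Set.IsWF {a : ℚ | ∃ n : ℕ, a / Q^n ∈ S} := by
  have hQ0 : (0:ℚ) < Q := lt_trans one_pos hQ
  rw [Set.isWF_iff_no_descending_seq]
  intro u hu hmem
  choose nf hnf0 using fun k => hmem k
  have hnf : ∀ k : ℕ, u k / Q ^ nf k ∈ S := hnf0
  have hne : S.Nonempty := ⟨_, hnf 0⟩
  have hm : 0 < hS.min hne := hpos _ (hS.min_mem hne)
  obtain ⟨N, hN⟩ := pow_unbounded_of_one_lt (u 0 / hS.min hne) hQ
  have hkN : ∀ k, nf k ≤ N := by
    intro k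
    by_contra hgt
    push_neg at hgt
    have h1 : hS.min hne ≤ u k / Q ^ nf k := hS.min_le hne (hnf k)
    have h2 : hS.min hne * Q ^ nf k ≤ u k := by
      rw [le_div_iff₀ (pow_pos hQ0 _)] at h1
      exact h1
    have h3 : u k ≤ u 0 := hu.antitone (Nat.zero_le k)
    have h4 : Q ^ N < Q ^ nf k := pow_lt_pow_right₀ hQ hgt
    have h6 : u 0 / hS.min hne < Q ^ nf k := lt_trans hN h4
    rw [div_lt_iff₀ hm] at h6
    nlinarith
  obtain ⟨n, hn_inf⟩ := exists_const_subseq hkN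
  have hgmono : StrictMono (Nat.nth (fun k => nf k = n)) := Nat.nth_strictMono hn_inf
  have hmem' : ∀ j, u (Nat.nth (fun k => nf k = n) j) / Q^n ∈ S := by
    intro j
    have hj : nf (Nat.nth (fun k => nf k = n) j) = n := Nat.nth_mem_of_infinite hn_inf j
    have := hnf (Nat.nth (fun k => nf k = n) j)
    rwa [hj] at this
  have hanti : StrictAnti (fun j => u (Nat.nth (fun k => nf k = n) j) / Q^n) := by
    intro x y hxy
    exact (div_lt_div_iff_of_pos_right (pow_pos hQ0 n)).mpr (hu (hgmono hxy))
  exact Set.isWF_iff_no_descending_seq.mp hS _ hanti hmem'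

lemma isWF_B {S : Set ℚ} (hS : S.IsWF) (hneg : ∀ x ∈ S, x < 0) {Q : ℚ} (hQ : 1 < Q) :
    Set.IsWF {a : ℚ | ∃ n : ℕ, a * Q^(n+1) ∈ S} := by
  have hQ0 : (0:ℚ) < Q := lt_trans one_pos hQ
  rw [Set.isWF_iff_no_descending_seq]
  intro u hu hmem
  choose nf hnf0 using fun k => hmem k
  have hnf : ∀ k : ℕ, u k * Q ^ (nf k + 1) ∈ S := hnf0
  have hne : S.Nonempty := ⟨_, hnf 0⟩
  have hm : hS.min hne < 0 := hneg _ (hS.min_mem hne)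
  have hu0 : u 0 < 0 := by
    have h := hneg _ (hnf 0)
    have hp : 0 < Q ^ (nf 0 + 1) := pow_pos hQ0 _
    nlinarith
  obtain ⟨N, hN⟩ := pow_unbounded_of_one_lt (hS.min hne / u 0) hQ
  have hkN : ∀ k, nf k ≤ N := by
    intro k
    by_contra hgt
    push_neg at hgt
    have h1 : hS.min hne ≤ u k * Q ^ (nf k + 1) := hS.min_le hne (hnf k)
    have h3 : u k ≤ u 0 := hu.antitone (Nat.zero_le k)
    have hp : 0 < Q ^ (nf k + 1) := pow_pos hQ0 _
    have h4 : u k * Q ^ (nf k + 1) ≤ u 0 * Q ^ (nf k + 1) := by nlinarith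
    have h5 : hS.min hne ≤ u 0 * Q ^ (nf k + 1) := le_trans h1 h4
    have h7 : Q ^ N < Q ^ (nf k + 1) := pow_lt_pow_right₀ hQ (by omega)
    have h9 : hS.min hne / u 0 < Q ^ (nf k + 1) := lt_trans hN h7
    rw [div_lt_iff_of_neg hu0] at h9
    nlinarith
  obtain ⟨n, hn_inf⟩ := exists_const_subseq hkN
  have hgmono : StrictMono (Nat.nth (fun k => nf k = n)) := Nat.nth_strictMono hn_inf
  have hmem' : ∀ j, u (Nat.nth (fun k => nf k = n) j) * Q^(n+1) ∈ S := by
    intro j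
    have hj : nf (Nat.nth (fun k => nf k = n) j) = n := Nat.nth_mem_of_infinite hn_inf j
    have := hnf (Nat.nth (fun k => nf k = n) j)
    rwa [hj] at this
  have hanti : StrictAnti (fun j => u (Nat.nth (fun k => nf k = n) j) * Q^(n+1)) := by
    intro x y hxy
    exact mul_lt_mul_of_pos_right (hu (hgmono hxy)) (pow_pos hQ0 _)
  exact Set.isWF_iff_no_descending_seq.mp hS _ hanti hmem'

end HahnConstruction

set_option synthInstance.maxHeartbeats 1000000 in
set_option maxHeartbeats 4000000 in
lemma onePlusTau_surj (p : ℕ) [Fact p.Prime] (e s : ℕ) (he : 1 ≤ e) (g : Ks p s) :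
    ∃ h : Ks p s, h + tau p e s h = g := by
  classical
  have hp1 : (1:ℚ) < (p:ℚ) := by exact_mod_cast (Fact.out : p.Prime).one_lt
  have hQ : (1:ℚ) < (p:ℚ)^e := one_lt_pow₀ hp1 (by omega)
  set Q : ℚ := (p:ℚ)^e with hQdef
  have hQ0 : (0:ℚ) < Q := lt_trans one_pos hQ
  set T : Ls p s ≃+* Ls p s := (phi p s)^e with hT
  set U : Ls p s ≃+* Ls p s := T.symm with hU
  set Fp : ℚ → ℕ → Ls p s :=
    fun a n => (-1:Ls p s)^n * (T^n) (g.coeff (a / Q^n)) with hFp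
  set Fm : ℚ → ℕ → Ls p s :=
    fun a n => (-1:Ls p s)^n * (U^(n+1)) (g.coeff (a * Q^(n+1))) with hFm
  set Gm : ℚ → ℕ → Ls p s :=
    fun a n => (-1:Ls p s)^n * (U^n) (g.coeff (a * Q^n)) with hGm
  -- antitone exponent sequences
  have hanti_div : ∀ a : ℚ, 0 < a → StrictAnti (fun n : ℕ => a / Q^n) := by
    intro a ha k l hkl
    exact div_lt_div_of_pos_left ha (pow_pos hQ0 k) (pow_lt_pow_right₀ hQ hkl)
  have hanti_mul : ∀ a : ℚ, a < 0 → StrictAnti (fun n : ℕ => a * Q^n) := by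
    intro a ha k l hkl
    exact mul_lt_mul_of_neg_left (pow_lt_pow_right₀ hQ hkl) ha
  have hanti_mul1 : ∀ a : ℚ, a < 0 → StrictAnti (fun n : ℕ => a * Q^(n+1)) := by
    intro a ha k l hkl
    exact hanti_mul a ha (by omega : k + 1 < l + 1)
  -- support finiteness of the coefficient families
  have hfinFp : ∀ a : ℚ, 0 < a → (Function.support (Fp a)).Finite := by
    intro a ha
    apply Set.Finite.subset (finite_hits g.isWF_support (hanti_div a ha))
    intro n hn
    simp only [Function.mem_support, hFp] at hn
    simp only [Set.mem_setOf_eq]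
    by_contra hns
    have h0 : g.coeff (a / Q^n) = 0 := Function.notMem_support.mp hns
    rw [h0, map_zero, mul_zero] at hn
    exact hn rfl
  have hfinFm : ∀ a : ℚ, a < 0 → (Function.support (Fm a)).Finite := by
    intro a ha
    apply Set.Finite.subset (finite_hits g.isWF_support (hanti_mul1 a ha))
    intro n hn
    simp only [Function.mem_support, hFm] at hn
    simp only [Set.mem_setOf_eq]
    by_contra hns
    have h0 : g.coeff (a * Q^(n+1)) = 0 := Function.notMem_support.mp hns
    rw [h0, map_zero, mul_zero] at hn
    exact hn rfl
  have hfinGm : ∀ a : ℚ, a < 0 → (Function.support (Gm a)).Finite := by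
    intro a ha
    apply Set.Finite.subset (finite_hits g.isWF_support (hanti_mul a ha))
    intro n hn
    simp only [Function.mem_support, hGm] at hn
    simp only [Set.mem_setOf_eq]
    by_contra hns
    have h0 : g.coeff (a * Q^n) = 0 := Function.notMem_support.mp hns
    rw [h0, map_zero, mul_zero] at hn
    exact hn rfl
  -- supports of the candidate coefficient functions
  set hpc : ℚ → Ls p s := fun a => if 0 < a then ∑ᶠ n, Fp a n else 0 with hhpc
  set hmc : ℚ → Ls p s := fun a => if a < 0 then ∑ᶠ n, Fm a n else 0 with hhmc
  have hSp_wf : (g.support ∩ Set.Ioi 0).IsWF := g.isWF_support.mono Set.inter_subset_left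
  have hSm_wf : (g.support ∩ Set.Iio 0).IsWF := g.isWF_support.mono Set.inter_subset_left
  have hA_wf : Set.IsWF {a : ℚ | ∃ n : ℕ, a / Q^n ∈ g.support ∩ Set.Ioi 0} :=
    isWF_A hSp_wf (fun x hx => hx.2) hQ
  have hB_wf : Set.IsWF {a : ℚ | ∃ n : ℕ, a * Q^(n+1) ∈ g.support ∩ Set.Iio 0} :=
    isWF_B hSm_wf (fun x hx => hx.2) hQ
  have hpsupp : Function.support hpc ⊆ {a : ℚ | ∃ n : ℕ, a / Q^n ∈ g.support ∩ Set.Ioi 0} := by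
    intro a ha
    simp only [Function.mem_support, hhpc] at ha
    by_cases h0 : 0 < a
    · rw [if_pos h0] at ha
      have : ∃ n, Fp a n ≠ 0 := by
        by_contra hall
        push_neg at hall
        exact ha (finsum_eq_zero_of_forall_eq_zero hall)
      obtain ⟨n, hn⟩ := this
      have hco : g.coeff (a / Q^n) ≠ 0 := by
        intro hz
        apply hn
        simp only [hFp, hz, map_zero, mul_zero]
      exact ⟨n, hco, Set.mem_Ioi.mpr (div_pos h0 (pow_pos hQ0 n))⟩
    · rw [if_neg h0] at ha
      exact absurd rfl ha
  have hmsupp : Function.support hmc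
      ⊆ {a : ℚ | ∃ n : ℕ, a * Q^(n+1) ∈ g.support ∩ Set.Iio 0} := by
    intro a ha
    simp only [Function.mem_support, hhmc] at ha
    by_cases h0 : a < 0
    · rw [if_pos h0] at ha
      have : ∃ n, Fm a n ≠ 0 := by
        by_contra hall
        push_neg at hall
        exact ha (finsum_eq_zero_of_forall_eq_zero hall)
      obtain ⟨n, hn⟩ := this
      have hco : g.coeff (a * Q^(n+1)) ≠ 0 := by
        intro hz
        apply hn
        simp only [hFm, hz, map_zero, mul_zero]
      refine ⟨n, hco, Set.mem_Iio.mpr ?_⟩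
      have := pow_pos hQ0 (n+1)
      nlinarith
    · rw [if_neg h0] at ha
      exact absurd rfl ha
  set Hp : Ks p s := ⟨hpc, hA_wf.isPWO.mono hpsupp⟩ with hHp
  set Hm : Ks p s := ⟨hmc, hB_wf.isPWO.mono hmsupp⟩ with hHm
  obtain ⟨x0, hx0⟩ := AS_surj p e s he (g.coeff 0)
  refine ⟨Hp + HahnSeries.single (0:ℚ) x0 + Hm, ?_⟩
  -- key identities
  have keyP : ∀ b : ℚ, 0 < b → (∑ᶠ n, Fp b n) + T (∑ᶠ n, Fp (b/Q) n) = g.coeff b := by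
    intro b hb
    have step1 : T (∑ᶠ n, Fp (b/Q) n) = ∑ᶠ n, T (Fp (b/Q) n) := ringEquiv_map_finsum T _
    have step2 : ∀ n : ℕ, T (Fp (b/Q) n) = - Fp b (n+1) := by
      intro n
      simp only [hFp]
      rw [map_mul, map_pow, map_neg, map_one, ← ringEquiv_pow_succ_apply]
      have harg : b / Q / Q^n = b / Q^(n+1) := by rw [div_div, ← pow_succ']
      rw [harg, pow_succ]
      ring
    have step3 : ∑ᶠ n, T (Fp (b/Q) n) = - ∑ᶠ n, Fp b (n+1) := by
      calc ∑ᶠ n, T (Fp (b/Q) n) = ∑ᶠ n, - Fp b (n+1) := finsum_congr step2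
      _ = - ∑ᶠ n, Fp b (n+1) := finsum_neg_distrib _
    have step4 : ∑ᶠ n, Fp b n = Fp b 0 + ∑ᶠ n, Fp b (n+1) :=
      finsum_nat_succ _ (hfinFp b hb)
    have hF0 : Fp b 0 = g.coeff b := by
      simp only [hFp, pow_zero, one_mul, div_one]
      rfl
    rw [step1, step3, step4, hF0]
    ring
  have keyM : ∀ b : ℚ, b < 0 → (∑ᶠ n, Fm b n) + T (∑ᶠ n, Fm (b/Q) n) = g.coeff b := by
    intro b hb
    have step1 : T (∑ᶠ n, Fm (b/Q) n) = ∑ᶠ n, T (Fm (b/Q) n) := ringEquiv_map_finsum T _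
    have step2 : ∀ n : ℕ, T (Fm (b/Q) n) = Gm b n := by
      intro n
      simp only [hFm, hGm]
      have harg : b / Q * Q^(n+1) = b * Q^n := by
        rw [pow_succ']
        field_simp
      rw [harg, map_mul, map_pow, map_neg, map_one]
      congr 1
      rw [ringEquiv_pow_succ_apply, hU]
      exact T.apply_symm_apply _
    have step3 : ∑ᶠ n, Gm b n = Gm b 0 + ∑ᶠ n, Gm b (n+1) :=
      finsum_nat_succ _ (hfinGm b hb)
    have hG0 : Gm b 0 = g.coeff b := by
      simp only [hGm, pow_zero, one_mul, mul_one]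
      rfl
    have step4 : ∀ n : ℕ, Gm b (n+1) = - Fm b n := by
      intro n
      simp only [hGm, hFm]
      rw [pow_succ]
      ring
    have step5 : ∑ᶠ n, Gm b (n+1) = - ∑ᶠ n, Fm b n := by
      calc ∑ᶠ n, Gm b (n+1) = ∑ᶠ n, - Fm b n := finsum_congr step4
      _ = - ∑ᶠ n, Fm b n := finsum_neg_distrib _
    rw [step1, finsum_congr step2, step3, step5, hG0]
    ring
  -- coefficientwise verification
  ext a
  rw [HahnSeries.coeff_add, tau_coeff p s e _ a]
  have hcoeff_h : ∀ b : ℚ, (Hp + HahnSeries.single (0:ℚ) x0 + Hm).coeff b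
      = hpc b + (if b = 0 then x0 else 0) + hmc b := by
    intro b
    rw [HahnSeries.coeff_add, HahnSeries.coeff_add, HahnSeries.coeff_single]
    split_ifs with h <;> rfl
  rw [hcoeff_h, hcoeff_h, ← hQdef]
  rcases lt_trichotomy a 0 with hneg | hzero | hpos
  · -- a < 0
    have haQ : a / Q < 0 := div_neg_of_neg_of_pos hneg hQ0
    rw [hhpc, hhmc]
    simp only
    rw [if_neg (by linarith : ¬ (0:ℚ) < a), if_neg (by linarith : ¬ (0:ℚ) < a / Q),
      if_pos hneg, if_pos haQ, if_neg (ne_of_lt hneg), if_neg (ne_of_lt haQ)]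
    simp only [zero_add, add_zero]
    exact keyM a hneg
  · -- a = 0
    subst hzero
    rw [zero_div]
    have h1 : hpc 0 = 0 := by rw [hhpc]; exact if_neg (lt_irrefl 0)
    have h2 : hmc 0 = 0 := by rw [hhmc]; exact if_neg (lt_irrefl 0)
    rw [h1, h2, if_pos rfl, zero_add, add_zero]
    exact hx0
  · -- 0 < a
    have haQ : 0 < a / Q := div_pos hpos hQ0
    rw [hhpc, hhmc]
    simp only
    rw [if_pos hpos, if_pos haQ, if_neg (by linarith : ¬ a < 0),
      if_neg (by linarith : ¬ a / Q < 0), if_neg (ne_of_gt hpos), if_neg (ne_of_gt haQ)]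
    simp only [zero_add, add_zero]
    exact keyP a hpos


set_option maxHeartbeats 1000000 in
/-- The Carlitz operator C_θ : f ↦ θf + τ(f) is surjective on 𝕂_s, i.e. the Carlitz
module C(𝕂_s) is θ-divisible. -/
theorem carlitz_module_theta_divisible (p : ℕ) [Fact p.Prime] (e s : ℕ) (he : 1 ≤ e)
    (g : Ks p s) : ∃ f : Ks p s, theta p s * f + tau p e s f = g := by
  have hp2 : 2 ≤ p := (Fact.out : p.Prime).two_le
  have hp1 : (1:ℚ) < (p:ℚ) := by exact_mod_cast (Fact.out : p.Prime).one_lt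
  have hQ : (1:ℚ) < (p:ℚ)^e := one_lt_pow₀ hp1 (by omega)
  set Q : ℚ := (p:ℚ)^e with hQdef
  have hQ1 : Q - 1 ≠ 0 := sub_ne_zero.mpr (ne_of_gt hQ)
  set b : ℚ := -(Q - 1)⁻¹ with hbdef
  set lam : Ks p s := HahnSeries.single b 1 with hlamdef
  have hb : Q * b = -1 + b := by rw [hbdef]; field_simp; ring
  have hlam : tau p e s lam = theta p s * lam := by
    rw [hlamdef, tau_single, map_one, ← hQdef, hb, theta,
      HahnSeries.single_mul_single, one_mul]
  have hw : theta p s * lam ≠ 0 := by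
    rw [theta, hlamdef, HahnSeries.single_mul_single, one_mul]
    exact HahnSeries.single_ne_zero one_ne_zero
  obtain ⟨h, hh⟩ := onePlusTau_surj p e s he ((theta p s * lam)⁻¹ * g)
  refine ⟨lam * h, ?_⟩
  rw [map_mul, hlam]
  have key : theta p s * (lam * h) + theta p s * lam * tau p e s h
      = (theta p s * lam) * (h + tau p e s h) := by ring
  rw [key, hh, mul_inv_cancel_left₀ hw]
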